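/- Let n ≥ 1 and let v_0, …, v_n be n+1 points on the unit sphere S^{n-1} in R^n whose convex hull has n-dimensional volume at least as large as the volume of the convex hull of any other n+1 points on S^{n-1}. Then all pairwise Euclidean distances between the v_j are equal (i.e., the convex hull is a regular simplex). -/

import Mathlib

open MeasureTheory RealInnerProductSpace Pointwise

noncomputable section Stmt13Aux

variable {n : ℕ}

private def bb (n : ℕ) : Module.Basis (Fin n) ℝ (EuclideanSpace ℝ (Fin n)) :=
  (EuclideanSpace.basisFun (Fin n) ℝ).toBasis

private lemma sum_coords (y : EuclideanSpace ℝ (Fin n)) :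
    ∑ k : Fin n, y k • bb n k = y := by
  conv_rhs => rw [← (bb n).sum_repr y]
  refine Finset.sum_congr rfl fun k _ => ?_
  rw [bb, OrthonormalBasis.coe_toBasis_repr_apply, EuclideanSpace.basisFun_repr]

private def wpt (n : ℕ) : Fin (n + 1) → EuclideanSpace ℝ (Fin n) :=
  Fin.cases 0 (fun i => bb n i)

private def SS (n : ℕ) : Set (EuclideanSpace ℝ (Fin n)) := convexHull ℝ (Set.range (wpt n))

private def Mx (v : Fin (n + 1) → EuclideanSpace ℝ (Fin n)) : Matrix (Fin n) (Fin n) ℝ :=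
  fun i k => (v k.succ - v 0) i

private lemma Mx_apply (v : Fin (n + 1) → EuclideanSpace ℝ (Fin n)) (i k : Fin n) :
    Mx v i k = v k.succ i - v 0 i := rfl

private lemma hull_eq (v : Fin (n + 1) → EuclideanSpace ℝ (Fin n)) :
    convexHull ℝ (Set.range v)
      = v 0 +ᵥ (⇑(Matrix.toLin (bb n) (bb n) (Mx v)) '' SS n) := by
  set T := Matrix.toLin (bb n) (bb n) (Mx v) with hT
  let g : EuclideanSpace ℝ (Fin n) →ᵃ[ℝ] EuclideanSpace ℝ (Fin n) :=
    { toFun := fun x => v 0 + T x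
      linear := T
      map_vadd' := by
        intro p q
        simp only [vadd_eq_add, map_add]
        abel }
  have hgw : g ∘ wpt n = v := by
    funext j
    induction j using Fin.cases with
    | zero => show v 0 + T (wpt n 0) = v 0; simp [wpt]
    | succ i =>
      show v 0 + T (wpt n i.succ) = v i.succ
      have h1 : T (wpt n i.succ) = v i.succ - v 0 := by
        show T (bb n i) = _
        rw [hT, Matrix.toLin_self]
        exact sum_coords (v i.succ - v 0)
      rw [h1]; abel
  have himg : ⇑g '' SS n = convexHull ℝ (Set.range v) := by
    rw [SS, AffineMap.image_convexHull, ← Set.range_comp, hgw]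
  rw [← himg]
  have : ⇑g '' SS n = (fun x => v 0 +ᵥ x) '' (⇑T '' SS n) := by
    rw [Set.image_image]; rfl
  rw [this, Set.image_vadd]

private lemma vol_hull (v : Fin (n + 1) → EuclideanSpace ℝ (Fin n)) :
    volume (convexHull ℝ (Set.range v))
      = ENNReal.ofReal |(Mx v).det| * volume (SS n) := by
  rw [hull_eq v, measure_vadd, Measure.addHaar_image_linearMap, LinearMap.det_toLin]

private lemma SS_pos : 0 < volume (SS n) := by
  have hsp : affineSpan ℝ (Set.range (wpt n)) = ⊤ := by
    rw [AffineSubspace.affineSpan_eq_top_iff_vectorSpan_eq_top_of_nonempty ℝ _ _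
      (Set.range_nonempty _)]
    rw [eq_top_iff, ← (bb n).span_eq]
    refine Submodule.span_le.2 ?_
    rintro x ⟨i, rfl⟩
    have : bb n i = wpt n i.succ -ᵥ wpt n 0 := by simp [wpt]
    rw [this]
    exact Submodule.subset_span (Set.vsub_mem_vsub ⟨i.succ, rfl⟩ ⟨0, rfl⟩)
  obtain ⟨x, hx⟩ := interior_convexHull_nonempty_iff_affineSpan_eq_top.2 hsp
  calc (0 : ENNReal) < volume (interior (SS n)) := isOpen_interior.measure_pos volume ⟨x, hx⟩
    _ ≤ volume (SS n) := measure_mono interior_subset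

private lemma SS_ne_top : volume (SS n) ≠ ⊤ :=
  ((Set.finite_range _).isCompact_convexHull ℝ).measure_lt_top.ne

private lemma det_le (v u : Fin (n + 1) → EuclideanSpace ℝ (Fin n))
    (h : volume (convexHull ℝ (Set.range u)) ≤ volume (convexHull ℝ (Set.range v))) :
    |(Mx u).det| ≤ |(Mx v).det| := by
  rw [vol_hull, vol_hull] at h
  have := (ENNReal.mul_le_mul_iff_left SS_pos.ne' SS_ne_top).1 h
  exact (ENNReal.ofReal_le_ofReal_iff (abs_nonneg _)).1 this

private lemma det_ne (hn : 1 ≤ n) (v : Fin (n + 1) → EuclideanSpace ℝ (Fin n))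
    (hmax : ∀ u : Fin (n + 1) → EuclideanSpace ℝ (Fin n), (∀ j, ‖u j‖ = 1) →
      MeasureTheory.volume (convexHull ℝ (Set.range u)) ≤
        MeasureTheory.volume (convexHull ℝ (Set.range v))) :
    (Mx v).det ≠ 0 := by
  have hi0 : 0 < n := hn
  set i0 : Fin n := ⟨0, hi0⟩ with hi0def
  set u0 : Fin (n + 1) → EuclideanSpace ℝ (Fin n) :=
    Fin.cases (-(EuclideanSpace.single i0 1)) (fun i => EuclideanSpace.single i 1) with hu0def
  have hu0 : ∀ j, ‖u0 j‖ = 1 := by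
    intro j
    induction j using Fin.cases with
    | zero => simp [u0]
    | succ i => simp [u0]
  have hM : ∀ i k : Fin n, Mx u0 i k
      = (if i = k then (1:ℝ) else 0) + (if i = i0 then 1 else 0) := by
    intro i k
    rw [Mx_apply]
    show EuclideanSpace.single k (1:ℝ) i - (-(EuclideanSpace.single i0 1)) i = _
    simp [EuclideanSpace.single_apply, sub_neg_eq_add]
  have hdet : (Mx u0).det = 2 := by
    rw [Matrix.det_of_upperTriangular]
    · have : ∀ i : Fin n, Mx u0 i i = if i = i0 then 2 else 1 := by
        intro i; rw [hM, if_pos rfl]; split_ifs <;> norm_num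
      calc ∏ i : Fin n, Mx u0 i i = ∏ i : Fin n, (if i = i0 then (2:ℝ) else 1) := by
            exact Finset.prod_congr rfl fun i _ => this i
        _ = 2 := by rw [Finset.prod_ite_eq' Finset.univ i0 (fun _ => (2:ℝ))]; simp
    · intro i k hik
      rw [hM]
      have h1 : i ≠ k := fun h => by simp [h] at hik
      have h2 : i ≠ i0 := by
        intro h
        rw [h] at hik
        exact absurd hik (by simp [hi0def, Fin.lt_iff_val_lt_val])
      simp [h1, h2]
  have hle := det_le v u0 (hmax u0 hu0)
  rw [hdet] at hle
  intro h0
  rw [h0] at hle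
  norm_num at hle

private lemma key (hn : 1 ≤ n) (v : Fin (n + 1) → EuclideanSpace ℝ (Fin n))
    (hv : ∀ j, ‖v j‖ = 1)
    (hmax : ∀ u : Fin (n + 1) → EuclideanSpace ℝ (Fin n), (∀ j, ‖u j‖ = 1) →
      MeasureTheory.volume (convexHull ℝ (Set.range u)) ≤
        MeasureTheory.volume (convexHull ℝ (Set.range v)))
    (i : Fin n) {k l : Fin (n + 1)} (hk : k ≠ i.succ) (hl : l ≠ i.succ) :
    ⟪v i.succ, v k⟫ = ⟪v i.succ, v l⟫ := by
  classical
  set A := Mx v with hA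
  let ψ : (Fin n → ℝ) →ₗ[ℝ] ℝ :=
    { toFun := fun y => (A.updateCol i y).det
      map_add' := fun y z => Matrix.det_updateCol_add A i y z
      map_smul' := fun c y => Matrix.det_updateCol_smul A i c y }
  set wv : EuclideanSpace ℝ (Fin n) :=
    (WithLp.equiv 2 (Fin n → ℝ)).symm (fun r => ψ (Pi.single r 1)) with hwvdef
  have hwv_apply : ∀ r, wv r = ψ (Pi.single r 1) := by
    intro r; rw [hwvdef]; rfl
  have hw : ∀ x : EuclideanSpace ℝ (Fin n), ψ (fun r => x r) = ⟪wv, x⟫ := by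
    intro x
    have hx : (fun r => x r) = ∑ r : Fin n, (x r) • (Pi.single r 1 : Fin n → ℝ) := by
      funext s
      simp [Finset.sum_apply, Pi.single_apply]
    rw [hx, map_sum]
    rw [PiLp.inner_apply]
    refine Finset.sum_congr rfl fun r _ => ?_
    rw [_root_.map_smul, ← hwv_apply r]
    simp [RCLike.inner_apply, smul_eq_mul, mul_comm]
  have hupd : ∀ x : EuclideanSpace ℝ (Fin n),
      Mx (Function.update v i.succ x) = A.updateCol i (fun r => x r - v 0 r) := by
    intro x
    funext r m
    rw [Mx_apply, Matrix.updateCol_apply]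
    by_cases hm : m = i
    · rw [hm, Function.update_self, Function.update_of_ne (Fin.succ_ne_zero i).symm,
        if_pos rfl]
    · have h1 : m.succ ≠ i.succ := fun h => hm (Fin.succ_injective _ h)
      rw [Function.update_of_ne h1, Function.update_of_ne (Fin.succ_ne_zero i).symm,
        if_neg hm, hA]
      exact (Mx_apply v r m).symm
  set c : ℝ := -(ψ (fun r => v 0 r)) with hcdef
  have hφ : ∀ x : EuclideanSpace ℝ (Fin n),
      (Mx (Function.update v i.succ x)).det = ⟪wv, x⟫ + c := by
    intro x
    rw [hupd x]
    have h1 : (fun r => x r - v 0 r) = (fun r => x r) - (fun r => v 0 r) := rfl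
    show ψ (fun r => x r - v 0 r) = _
    rw [h1, map_sub, hw, hcdef]
    ring
  have hzero : ∀ m : Fin (n + 1), m ≠ i.succ → ⟪wv, v m⟫ + c = 0 := by
    intro m hm
    rw [← hφ (v m)]
    induction m using Fin.cases with
    | zero =>
      rw [hupd]
      apply Matrix.det_eq_zero_of_column_eq_zero i
      intro r
      simp [Matrix.updateCol_apply]
    | succ m' =>
      have hm' : m' ≠ i := fun h => hm (by rw [h])
      rw [hupd]
      apply Matrix.det_zero_of_column_eq hm'
      intro r
      rw [Matrix.updateCol_apply, Matrix.updateCol_apply, if_neg hm', if_pos rfl, hA]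
      exact Mx_apply v r m'
  have hdv : (Mx v).det ≠ 0 := det_ne hn v hmax
  have hMv : (Mx v).det = ⟪wv, v i.succ⟫ + c := by
    conv_lhs => rw [← Function.update_eq_self i.succ v]
    exact hφ (v i.succ)
  have hφv : ⟪wv, v i.succ⟫ + c ≠ 0 := hMv ▸ hdv
  have hwvne : wv ≠ 0 := by
    intro h
    have h0 := hzero 0 (Fin.succ_ne_zero i).symm
    rw [h, inner_zero_left] at h0
    rw [h, inner_zero_left] at hφv
    exact hφv h0
  have hcomp : ∀ x : EuclideanSpace ℝ (Fin n), ‖x‖ = 1 →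
      |⟪wv, x⟫ + c| ≤ |⟪wv, v i.succ⟫ + c| := by
    intro x hx
    have hunit : ∀ j, ‖Function.update v i.succ x j‖ = 1 := by
      intro j
      rcases eq_or_ne j i.succ with rfl | hj
      · rw [Function.update_self]; exact hx
      · rw [Function.update_of_ne hj]; exact hv j
    have h1 := det_le v _ (hmax _ hunit)
    rw [hφ x, hMv] at h1
    exact h1
  set a : ℝ := ⟪wv, v i.succ⟫ with hadef
  have hna : |a| ≤ ‖wv‖ := by
    have := abs_real_inner_le_norm wv (v i.succ)
    rwa [hv, mul_one] at this
  have hwpos : (0:ℝ) < ‖wv‖ := norm_pos_iff.2 hwvne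
  have hinner : ⟪wv, ‖wv‖⁻¹ • wv⟫ = ‖wv‖ := by
    rw [real_inner_smul_right, real_inner_self_eq_norm_sq]
    field_simp
  have hunorm : ‖(‖wv‖⁻¹ • wv)‖ = 1 := by
    rw [norm_smul, Real.norm_eq_abs, abs_inv, abs_norm]
    field_simp
  have h2 : ‖wv‖ + |c| ≤ |a + c| := by
    have hplus := hcomp (‖wv‖⁻¹ • wv) hunorm
    have hminus := hcomp (-(‖wv‖⁻¹ • wv)) (by rw [norm_neg]; exact hunorm)
    rw [hinner] at hplus
    rw [inner_neg_right, hinner] at hminus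
    rcases le_total 0 c with hc | hc
    · have : |‖wv‖ + c| = ‖wv‖ + |c| := by
        rw [abs_of_nonneg hc, abs_of_nonneg (by linarith)]
      rw [this] at hplus; exact hplus
    · have : |-‖wv‖ + c| = ‖wv‖ + |c| := by
        rw [abs_of_nonpos hc, abs_of_nonpos (by linarith)]
        ring
      rw [this] at hminus; exact hminus
  have ha : |a| = ‖wv‖ := by
    have h3 : |a + c| ≤ |a| + |c| := abs_add_le _ _
    linarith
  have hcol : ∃ ε : ℝ, ∀ y : EuclideanSpace ℝ (Fin n),
      ⟪v i.succ, y⟫ = ε * ⟪wv, y⟫ := by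
    rcases abs_cases a with ⟨h1, _⟩ | ⟨h1, _⟩
    · -- a = ‖wv‖
      have heq : ⟪wv, v i.succ⟫ = ‖wv‖ * ‖v i.succ‖ := by
        rw [← hadef, hv, mul_one, ← ha]
        exact h1.symm
      have hth := inner_eq_norm_mul_iff_real.1 heq
      rw [hv, one_smul] at hth
      refine ⟨‖wv‖⁻¹, fun y => ?_⟩
      have h6 : ⟪wv, y⟫ = ‖wv‖ * ⟪v i.succ, y⟫ := by
        conv_lhs => rw [hth]
        rw [real_inner_smul_left]
      rw [h6]
      field_simp
    · -- a = -‖wv‖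
      have heq : ⟪-wv, v i.succ⟫ = ‖-wv‖ * ‖v i.succ‖ := by
        rw [inner_neg_left, ← hadef, hv, mul_one, norm_neg, ← ha]
        linarith [h1]
      have hth := inner_eq_norm_mul_iff_real.1 heq
      rw [hv, one_smul, norm_neg] at hth
      refine ⟨-‖wv‖⁻¹, fun y => ?_⟩
      have h4 : ⟪wv, y⟫ = -(‖wv‖ * ⟪v i.succ, y⟫) := by
        have h5 : wv = -(‖wv‖ • v i.succ) := by
          rw [← hth, neg_neg]
        conv_lhs => rw [h5]
        rw [inner_neg_left, real_inner_smul_left]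
      rw [h4]
      field_simp
  obtain ⟨ε, hE⟩ := hcol
  have hk0 : ⟪wv, v k⟫ = -c := by linarith [hzero k hk]
  have hl0 : ⟪wv, v l⟫ = -c := by linarith [hzero l hl]
  rw [hE, hE, hk0, hl0]

private lemma inner_const (hn : 1 ≤ n) (v : Fin (n + 1) → EuclideanSpace ℝ (Fin n))
    (hv : ∀ j, ‖v j‖ = 1)
    (hmax : ∀ u : Fin (n + 1) → EuclideanSpace ℝ (Fin n), (∀ j, ‖u j‖ = 1) →
      MeasureTheory.volume (convexHull ℝ (Set.range u)) ≤
        MeasureTheory.volume (convexHull ℝ (Set.range v)))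
    (j k l : Fin (n + 1)) (hk : k ≠ j) (hl : l ≠ j) : ⟪v j, v k⟫ = ⟪v j, v l⟫ := by
  induction j using Fin.cases with
  | succ i => exact key hn v hv hmax i hk hl
  | zero =>
    have hi0 : 0 < n := hn
    set i0 : Fin n := ⟨0, hi0⟩ with hi0def
    set σ : Equiv.Perm (Fin (n + 1)) := Equiv.swap 0 i0.succ with hσ
    set v' : Fin (n + 1) → EuclideanSpace ℝ (Fin n) := v ∘ σ with hv'def
    have hr : Set.range v' = Set.range v := by
      rw [hv'def, Set.range_comp, σ.surjective.range_eq, Set.image_univ]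
    have hv'1 : ∀ m, ‖v' m‖ = 1 := fun m => hv _
    have hmax' : ∀ u : Fin (n + 1) → EuclideanSpace ℝ (Fin n), (∀ m, ‖u m‖ = 1) →
        MeasureTheory.volume (convexHull ℝ (Set.range u)) ≤
          MeasureTheory.volume (convexHull ℝ (Set.range v')) := by
      intro u hu
      rw [hr]
      exact hmax u hu
    have hσ0 : σ 0 = i0.succ := Equiv.swap_apply_left 0 i0.succ
    have hσk : σ k ≠ i0.succ := fun h => hk (σ.injective (h.trans hσ0.symm))
    have hσl : σ l ≠ i0.succ := fun h => hl (σ.injective (h.trans hσ0.symm))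
    have hkey := key hn v' hv'1 hmax' i0 hσk hσl
    have e1 : v' i0.succ = v 0 := by
      rw [hv'def]
      show v (σ i0.succ) = v 0
      rw [hσ, Equiv.swap_apply_right]
    have e2 : v' (σ k) = v k := by
      rw [hv'def]
      show v (σ (σ k)) = v k
      rw [hσ, Equiv.swap_apply_self]
    have e3 : v' (σ l) = v l := by
      rw [hv'def]
      show v (σ (σ l)) = v l
      rw [hσ, Equiv.swap_apply_self]
    rw [e1, e2, e3] at hkey
    exact hkey

end Stmt13Aux

/-- If `v₀, …, vₙ` are `n + 1` points on the unit sphere in `ℝⁿ` whose convex hull has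
volume at least as large as that of any other `n + 1` points on the unit sphere, then
all pairwise distances between the `vⱼ` are equal, i.e. the convex hull is a regular
simplex. -/
theorem stmt13 (n : ℕ) (hn : 1 ≤ n) (v : Fin (n + 1) → EuclideanSpace ℝ (Fin n))
    (hv : ∀ j, ‖v j‖ = 1)
    (hmax : ∀ u : Fin (n + 1) → EuclideanSpace ℝ (Fin n), (∀ j, ‖u j‖ = 1) →
      MeasureTheory.volume (convexHull ℝ (Set.range u)) ≤
        MeasureTheory.volume (convexHull ℝ (Set.range v))) :
    ∀ j k j' k' : Fin (n + 1), j ≠ k → j' ≠ k' → ‖v j - v k‖ = ‖v j' - v k'‖ := by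
  intro j k j' k' hjk hjk'
  have hic := inner_const hn v hv hmax
  have hinner : ⟪v j, v k⟫ = ⟪v j', v k'⟫ := by
    rcases eq_or_ne j j' with rfl | hjj
    · exact hic j k k' hjk.symm hjk'.symm
    · calc ⟪v j, v k⟫ = ⟪v j, v j'⟫ := hic j k j' hjk.symm (Ne.symm hjj)
        _ = ⟪v j', v j⟫ := real_inner_comm _ _
        _ = ⟪v j', v k'⟫ := hic j' j k' hjj hjk'.symm
  have h1 : ‖v j - v k‖ ^ 2 = ‖v j' - v k'‖ ^ 2 := by
    rw [norm_sub_sq_real, norm_sub_sq_real, hv, hv, hv, hv, hinner]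
  rw [← Real.sqrt_sq (norm_nonneg (v j - v k)), ← Real.sqrt_sq (norm_nonneg (v j' - v k')), h1]
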